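/- Let $p \in (0,1)$, $p \neq 1/2$, and let $\eta$ be the centered random variable with $\mathbb{P}(\eta = 1-p) = p$ and $\mathbb{P}(\eta = -p) = 1-p$. Then for all $\lambda \in \mathbb{R}$, $\mathbb{E}[\exp(\lambda \eta)] \leq \exp(\lambda^2 Q(p))$, where $Q(p) = \frac{1-2p}{4\log((1-p)/p)}$. -/

import Mathlib

set_option maxHeartbeats 1000000

open Real Set

open MeasureTheory

lemma logA {y : ℝ} (hy : 1 < y) : 2 * Real.log y < y - 1/y := by
  have h0 : (0:ℝ) < 1 := one_pos
  set g : ℝ → ℝ := fun x => x - 1/x - 2 * Real.log x with hg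
  have key : StrictMonoOn g (Ici 1) := by
    apply strictMonoOn_of_hasDerivWithinAt_pos (convex_Ici 1)
      (f' := fun x => 1 + 1/x^2 - 2/x)
    · apply ContinuousOn.sub (ContinuousOn.sub continuousOn_id ?_) ?_
      · exact continuousOn_const.div continuousOn_id (fun x hx => by
          have : (1:ℝ) ≤ x := hx; positivity)
      · exact continuousOn_const.mul (Real.continuousOn_log.mono (fun x hx => by
          have : (1:ℝ) ≤ x := hx; simp; positivity))
    · intro x hx
      rw [interior_Ici] at hx
      have hx0 : x ≠ 0 := by have : (1:ℝ) < x := hx; positivity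
      have : HasDerivAt g (1 + 1/x^2 - 2/x) x := by
        have h1 : HasDerivAt (fun x : ℝ => 1/x) (-(x^2)⁻¹) x := by
          simpa [one_div] using hasDerivAt_inv hx0
        have h2 : HasDerivAt Real.log x⁻¹ x := Real.hasDerivAt_log hx0
        have := ((hasDerivAt_id x).sub h1).sub (h2.const_mul 2)
        refine this.congr_deriv ?_
        ring
      exact this.hasDerivWithinAt
    · intro x hx
      rw [interior_Ici] at hx
      have hx1 : (1:ℝ) < x := hx
      have hx0 : (0:ℝ) < x := by linarith
      have h : 1 + 1/x^2 - 2/x = (1 - 1/x)^2 := by field_simp; ring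
      rw [h]
      have h2 : 1/x < 1 := by rw [div_lt_one hx0]; exact hx1
      have h3 : 0 < 1 - 1/x := by linarith
      positivity
  have := key (self_mem_Ici) (le_of_lt hy) hy
  simp [hg, one_div] at this
  rw [one_div]
  linarith

lemma logB {x : ℝ} (hx : 1 ≤ x) : 2*(x-1)/(x+1) ≤ Real.log x := by
  set g : ℝ → ℝ := fun x => Real.log x - 2*(x-1)/(x+1) with hg
  have key : MonotoneOn g (Ici 1) := by
    apply monotoneOn_of_hasDerivWithinAt_nonneg (convex_Ici 1)
      (f' := fun x => 1/x - 4/(x+1)^2)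
    · apply ContinuousOn.sub
      · exact Real.continuousOn_log.mono (fun x hx => by
          have h1 : (1:ℝ) ≤ x := hx
          simp only [Set.mem_compl_iff, Set.mem_singleton_iff]
          positivity)
      · exact (continuousOn_const.mul (continuousOn_id.sub continuousOn_const)).div
          (continuousOn_id.add continuousOn_const) (fun x hx => by
            have h1 : (1:ℝ) ≤ x := hx
            intro h
            have h2 : x + 1 = 0 := by simpa using h
            linarith)
    · intro x hx
      rw [interior_Ici] at hx
      have hx1 : (1:ℝ) < x := hx
      have hx0 : x ≠ 0 := by positivity
      have hx0' : x + 1 ≠ 0 := by positivity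
      have : HasDerivAt g (1/x - 4/(x+1)^2) x := by
        have h2 : HasDerivAt Real.log x⁻¹ x := Real.hasDerivAt_log hx0
        have h3 : HasDerivAt (fun x : ℝ => 2*(x-1)/(x+1))
            ((2*1*(x+1) - 2*(x-1)*1)/(x+1)^2) x := by
          have := (((hasDerivAt_id x).sub_const 1).const_mul 2).div
            ((hasDerivAt_id x).add_const 1) hx0'
          simpa [Pi.div_def] using this
        have := h2.sub h3
        refine this.congr_deriv ?_
        ring
      exact this.hasDerivWithinAt
    · intro x hx
      rw [interior_Ici] at hx
      have hx1 : (1:ℝ) < x := hx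
      have hx0 : (0:ℝ) < x := by linarith
      have : 1/x - 4/(x+1)^2 = (x-1)^2/(x*(x+1)^2) := by field_simp; ring
      rw [this]
      positivity
  have := key (self_mem_Ici) hx hx
  simp [hg] at this
  linarith

noncomputable def Ff (p q Q : ℝ) (t : ℝ) : ℝ := p*t + Q*t^2 - Real.log (p*Real.exp t + q)
noncomputable def Fd (p q Q : ℝ) (t : ℝ) : ℝ := p + 2*Q*t - p*Real.exp t/(p*Real.exp t + q)
noncomputable def Fdd (p q Q : ℝ) (t : ℝ) : ℝ := 2*Q - p*q*Real.exp t/(p*Real.exp t + q)^2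

lemma hasDeriv1 {p q Q : ℝ} (hp : 0 < p) (hq : 0 < q) (t : ℝ) :
    HasDerivAt (Ff p q Q) (Fd p q Q t) t := by
  have hden : 0 < p*Real.exp t + q := by positivity
  have h1 : HasDerivAt (fun t : ℝ => p*Real.exp t + q) (p * Real.exp t) t :=
    ((Real.hasDerivAt_exp t).const_mul p).add_const q
  have hlog : HasDerivAt (fun t : ℝ => Real.log (p*Real.exp t + q))
      (p*Real.exp t/(p*Real.exp t + q)) t := h1.log (ne_of_gt hden)
  have hlin : HasDerivAt (fun t : ℝ => p*t + Q*t^2) (p + 2*Q*t) t := by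
    have := ((hasDerivAt_id t).const_mul p).add (((hasDerivAt_pow 2 t)).const_mul Q)
    refine this.congr_deriv ?_
    rw [show (2:ℕ)-1 = 1 from rfl]; push_cast; ring
  exact hlin.sub hlog

lemma hasDeriv2 {p q Q : ℝ} (hp : 0 < p) (hq : 0 < q) (t : ℝ) :
    HasDerivAt (Fd p q Q) (Fdd p q Q t) t := by
  have hden : 0 < p*Real.exp t + q := by positivity
  have h0 : HasDerivAt (fun t : ℝ => p*Real.exp t) (p * Real.exp t) t :=
    (Real.hasDerivAt_exp t).const_mul p
  have h1 : HasDerivAt (fun t : ℝ => p*Real.exp t + q) (p * Real.exp t) t := h0.add_const q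
  have hdiv : HasDerivAt (fun t : ℝ => p*Real.exp t/(p*Real.exp t + q))
      ((p*Real.exp t*(p*Real.exp t + q) - p*Real.exp t*(p*Real.exp t))/(p*Real.exp t + q)^2) t :=
    h0.div h1 (ne_of_gt hden)
  have hlin : HasDerivAt (fun t : ℝ => p + 2*Q*t) (2*Q) t := by
    simpa using ((hasDerivAt_id t).const_mul (2*Q)).const_add p
  have e : (p*Real.exp t*(p*Real.exp t + q) - p*Real.exp t*(p*Real.exp t))/(p*Real.exp t + q)^2
      = p*q*Real.exp t/(p*Real.exp t + q)^2 := by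
    rw [div_eq_div_iff (by positivity) (by positivity)]
    ring
  have h9 := hlin.sub hdiv
  rw [e] at h9
  exact h9

lemma Ffcont (p q Q : ℝ) (hp : 0 < p) (hq : 0 < q) : Continuous (Ff p q Q) :=
  continuous_iff_continuousAt.2 fun t => (hasDeriv1 hp hq t).continuousAt

lemma Fdcont (p q Q : ℝ) (hp : 0 < p) (hq : 0 < q) : Continuous (Fd p q Q) :=
  continuous_iff_continuousAt.2 fun t => (hasDeriv2 hp hq t).continuousAt

lemma KS_core (p q L Q : ℝ) (hp0 : 0 < p) (hp2 : p < 1/2) (hq : q = 1 - p)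
    (hL : L = Real.log (q/p)) (hQ : Q = (1-2*p)/(4*L)) :
    ∀ t : ℝ, Real.log (p*Real.exp t + q) ≤ p*t + Q*t^2 := by
  have hq0 : 0 < q := by rw [hq]; linarith
  have hpq : p + q = 1 := by rw [hq]; ring
  have hpltq : p < q := by rw [hq]; linarith
  have hqp1 : 1 < q / p := (one_lt_div hp0).2 hpltq
  have hL0 : 0 < L := hL ▸ Real.log_pos hqp1
  have hQnum : 0 < 1 - 2*p := by linarith
  have hQ0 : 0 < Q := hQ ▸ div_pos hQnum (by linarith)
  have hQL : 4*L*Q = 1 - 2*p := by rw [hQ]; field_simp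
  -- key inequality : p*q < 2*Q
  have hkey : p*q*(2*L) < 1 - 2*p := by
    have h' : 2*L < q/p - 1/(q/p) := hL ▸ logA hqp1
    rw [one_div_div] at h'
    have e1 : p*q*(q/p - p/q) = 1 - 2*p := by
      rw [hq]
      have h1 : p ≠ 0 := hp0.ne'
      have h2 : 1 - p ≠ 0 := by linarith
      field_simp
      ring
    have h2 := mul_lt_mul_of_pos_left h' (mul_pos hp0 hq0)
    linarith [e1]
  have hpq2Q : p*q < 2*Q := by
    have h2L : (0:ℝ) < 2*L := by linarith
    have h3 : p*q*(2*L) < 2*Q*(2*L) := by nlinarith [hQL, hkey]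
    exact lt_of_mul_lt_mul_right h3 h2L.le
  -- Q ≤ 1/8
  have hQ8 : 8*Q ≤ 1 := by
    have h' : 2*((q/p)-1)/((q/p)+1) ≤ L := hL ▸ logB (le_of_lt hqp1)
    have e1 : 2*((q/p)-1)/((q/p)+1) = 2*(1-2*p) := by
      rw [hq]
      have h1 : (1-p)/p + 1 = 1/p := by field_simp; ring
      have h2 : (1-p)/p - 1 = (1-2*p)/p := by field_simp; ring
      rw [h1, h2]
      field_simp
    rw [e1] at h'
    nlinarith [hQL, hL0]
  -- roots of the quadratic
  obtain ⟨S, hSnn, hS2⟩ : ∃ S : ℝ, 0 ≤ S ∧ S^2 = 1 - 8*Q :=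
    ⟨Real.sqrt (1-8*Q), Real.sqrt_nonneg _, Real.sq_sqrt (by linarith)⟩
  have h4Q : 0 < 1 - 4*Q := by linarith
  have hSlt : S < 1 - 4*Q := by
    by_contra hcon
    push_neg at hcon
    have h5 : (1-4*Q)^2 ≤ S^2 := pow_le_pow_left₀ h4Q.le hcon 2
    nlinarith [mul_pos hQ0 hQ0]
  obtain ⟨X₁, hX₁⟩ : ∃ x : ℝ, x = q*(1-4*Q-S)/(4*Q*p) := ⟨_, rfl⟩
  obtain ⟨X₂, hX₂⟩ : ∃ x : ℝ, x = q*(1-4*Q+S)/(4*Q*p) := ⟨_, rfl⟩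
  have hA : (0:ℝ) < 4*Q*p := by positivity
  have hX1m : 4*Q*p*X₁ = q*(1-4*Q-S) := by rw [hX₁]; field_simp
  have hX2m : 4*Q*p*X₂ = q*(1-4*Q+S) := by rw [hX₂]; field_simp
  have hX1pos : 0 < X₁ := by
    rw [hX₁]; exact div_pos (mul_pos hq0 (by linarith)) hA
  have hX2pos : 0 < X₂ := by
    rw [hX₂]; exact div_pos (mul_pos hq0 (by linarith)) hA
  have hX12 : X₁ ≤ X₂ := by
    rw [hX₁, hX₂]
    apply (div_le_div_iff_of_pos_right hA).2
    nlinarith [mul_nonneg hq0.le hSnn]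
  -- the factorization
  have hfac : ∀ X : ℝ, 2*Q*(p*X+q)^2 - p*q*X = 2*Q*p^2*(X - X₁)*(X - X₂) := by
    intro X
    apply mul_left_cancel₀ (a := (4*Q*p)^2) (by positivity)
    have expand : (4*Q*p)^2 * (2*Q*p^2*(X-X₁)*(X-X₂))
        = 2*Q*p^2*((4*Q*p)*X - 4*Q*p*X₁)*((4*Q*p)*X - 4*Q*p*X₂) := by ring
    rw [expand, hX1m, hX2m]
    linear_combination (2*Q*p^2*q^2) * hS2
  have hprodm : p^2*(X₁*X₂) = q^2 := by
    apply mul_left_cancel₀ (show (16*Q^2:ℝ) ≠ 0 by positivity)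
    calc (16*Q^2) * (p^2*(X₁*X₂)) = (4*Q*p*X₁)*(4*Q*p*X₂) := by ring
    _ = (q*(1-4*Q-S))*(q*(1-4*Q+S)) := by rw [hX1m, hX2m]
    _ = 16*Q^2*q^2 := by linear_combination (-q^2)*hS2
  have hX1X2gt1 : 1 < X₁*X₂ := by
    nlinarith [hprodm, mul_lt_mul_of_pos_left hpltq hp0, mul_lt_mul_of_pos_left hpltq hq0,
      mul_pos hp0 hp0]
  have h1X1 : 1 < X₁ := by
    have h0 : 2*Q - p*q = 2*Q*p^2*((1-X₁)*(1-X₂)) := by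
      have := hfac 1
      linear_combination this - (2*Q*(p+q+1))*hpq
    have hprodpos : 0 < (1 - X₁)*(1 - X₂) := by
      by_contra hcon
      push_neg at hcon
      have hnp := mul_nonpos_of_nonneg_of_nonpos
        (show (0:ℝ) ≤ 2*Q*p^2 by positivity) hcon
      linarith
    by_contra hle
    push_neg at hle
    have hX2gt1 : 1 < X₂ := by
      by_contra hc
      push_neg at hc
      nlinarith [mul_le_mul hle hc hX2pos.le (by linarith : (0:ℝ) ≤ 1)]
    nlinarith [mul_nonneg (by linarith : (0:ℝ) ≤ 1 - X₁) (by linarith : (0:ℝ) ≤ X₂ - 1)]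
  have hX2W : p^2 * X₂ < q^2 := by
    by_contra hge
    push_neg at hge
    nlinarith [mul_lt_mul_of_pos_right h1X1 (mul_pos (mul_pos hp0 hp0) hX2pos), hprodm]
  -- switch to logs
  obtain ⟨s₁, hs₁⟩ : ∃ s : ℝ, s = Real.log X₁ := ⟨_, rfl⟩
  obtain ⟨s₂, hs₂⟩ : ∃ s : ℝ, s = Real.log X₂ := ⟨_, rfl⟩
  have hes₁ : Real.exp s₁ = X₁ := by rw [hs₁]; exact Real.exp_log hX1pos
  have hes₂ : Real.exp s₂ = X₂ := by rw [hs₂]; exact Real.exp_log hX2pos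
  have hs1pos : 0 < s₁ := by rw [hs₁]; exact Real.log_pos h1X1
  have hs12 : s₁ ≤ s₂ := by rw [hs₁, hs₂]; exact Real.log_le_log hX1pos hX12
  have he2L : Real.exp (2*L) = (q/p)^2 := by
    rw [hL, show (2:ℝ)*Real.log (q/p) = Real.log ((q/p)^2) by
      rw [Real.log_pow]; norm_num]
    exact Real.exp_log (by positivity)
  have hX2W' : X₂ < (q/p)^2 := by
    rw [div_pow, lt_div_iff₀ (by positivity)]
    nlinarith [hX2W]

  have hs2lt : s₂ < 2*L := by
    have := Real.exp_lt_exp.1 (lt_of_eq_of_lt (hes₂) (lt_of_lt_of_eq hX2W' he2L.symm))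
    exact this
  -- sign of Fdd
  have hFdd : ∀ x : ℝ, Fdd p q Q x
      = 2*Q*p^2*(Real.exp x - X₁)*(Real.exp x - X₂)/(p*Real.exp x + q)^2 := by
    intro x
    have hden : 0 < p*Real.exp x + q := by positivity
    have hd' : (p*Real.exp x + q) ≠ 0 := hden.ne'
    have hp' : p ≠ 0 := hp0.ne'
    unfold Fdd
    rw [← hfac (Real.exp x)]
    field_simp
  have hFdd_pos_lo : ∀ x < s₁, 0 ≤ Fdd p q Q x := by
    intro x hx
    have hE : Real.exp x < X₁ := by rw [← hes₁]; exact Real.exp_lt_exp.2 hx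
    rw [hFdd x]
    have hden : 0 < p*Real.exp x + q := by positivity
    apply div_nonneg ?_ (by positivity)
    have h9 : (0:ℝ) ≤ (X₁ - Real.exp x)*(X₂ - Real.exp x) :=
      mul_nonneg (by linarith) (by linarith)
    have h10 := mul_nonneg (show (0:ℝ) ≤ 2*Q*p^2 by positivity) h9
    linarith [h10]
  have hFdd_neg_mid : ∀ x, s₁ < x → x < s₂ → Fdd p q Q x ≤ 0 := by
    intro x h1 h2
    have hE1 : X₁ < Real.exp x := by rw [← hes₁]; exact Real.exp_lt_exp.2 h1
    have hE2 : Real.exp x < X₂ := by rw [← hes₂]; exact Real.exp_lt_exp.2 h2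
    rw [hFdd x]
    have hden : 0 < p*Real.exp x + q := by positivity
    apply div_nonpos_of_nonpos_of_nonneg ?_ (by positivity)
    have h9 : (0:ℝ) ≤ (Real.exp x - X₁)*(X₂ - Real.exp x) :=
      mul_nonneg (by linarith) (by linarith)
    have h10 := mul_nonneg (show (0:ℝ) ≤ 2*Q*p^2 by positivity) h9
    linarith [h10]
  have hFdd_pos_hi : ∀ x, s₂ < x → 0 ≤ Fdd p q Q x := by
    intro x hx
    have hE : X₂ < Real.exp x := by rw [← hes₂]; exact Real.exp_lt_exp.2 hx
    rw [hFdd x]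
    have hden : 0 < p*Real.exp x + q := by positivity
    apply div_nonneg ?_ (by positivity)
    have h9 : (0:ℝ) ≤ (Real.exp x - X₁)*(Real.exp x - X₂) :=
      mul_nonneg (by linarith) (by linarith)
    have h10 := mul_nonneg (show (0:ℝ) ≤ 2*Q*p^2 by positivity) h9
    linarith [h10]
  -- special values
  have hden0 : p*Real.exp 0 + q = 1 := by rw [Real.exp_zero]; linarith
  have hF0 : Ff p q Q 0 = 0 := by
    unfold Ff; rw [hden0, Real.log_one]; ring
  have hFd0 : Fd p q Q 0 = 0 := by
    unfold Fd
    rw [hden0, Real.exp_zero]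
    field_simp
    ring
  have hden2L : p*Real.exp (2*L) + q = q/p := by
    rw [he2L]
    have hp' : p ≠ 0 := hp0.ne'
    field_simp
    linear_combination hpq
  have hF2L : Ff p q Q (2*L) = 0 := by
    unfold Ff
    rw [hden2L, ← hL]
    linear_combination L*hQL
  have hFd2L : Fd p q Q (2*L) = 0 := by
    unfold Fd
    rw [hden2L, he2L]
    have e : p * (q/p)^2 / (q/p) = q := by
      have hp' := hp0.ne'
      have hq' := hq0.ne'
      field_simp
    rw [e]
    linear_combination hQL - hpq
  -- monotonicity of Fd
  have M1 : MonotoneOn (Fd p q Q) (Iic s₁) := by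
    apply monotoneOn_of_hasDerivWithinAt_nonneg (convex_Iic s₁)
      ((Fdcont p q Q hp0 hq0).continuousOn)
      (f' := Fdd p q Q)
      (fun x hx => (hasDeriv2 hp0 hq0 x).hasDerivWithinAt)
    intro x hx
    rw [interior_Iic] at hx
    exact hFdd_pos_lo x hx
  have M2 : AntitoneOn (Fd p q Q) (Icc s₁ s₂) := by
    apply antitoneOn_of_hasDerivWithinAt_nonpos (convex_Icc s₁ s₂)
      ((Fdcont p q Q hp0 hq0).continuousOn)
      (f' := Fdd p q Q)
      (fun x hx => (hasDeriv2 hp0 hq0 x).hasDerivWithinAt)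
    intro x hx
    rw [interior_Icc] at hx
    exact hFdd_neg_mid x hx.1 hx.2
  have M3 : MonotoneOn (Fd p q Q) (Ici s₂) := by
    apply monotoneOn_of_hasDerivWithinAt_nonneg (convex_Ici s₂)
      ((Fdcont p q Q hp0 hq0).continuousOn)
      (f' := Fdd p q Q)
      (fun x hx => (hasDeriv2 hp0 hq0 x).hasDerivWithinAt)
    intro x hx
    rw [interior_Ici] at hx
    exact hFdd_pos_hi x hx
  -- signs of Fd
  have n1 : ∀ x ≤ 0, Fd p q Q x ≤ 0 := fun x hx => by
    have := M1 (by simp [Set.mem_Iic]; linarith : x ∈ Iic s₁)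
      (by simp [Set.mem_Iic]; linarith : (0:ℝ) ∈ Iic s₁) hx
    rwa [hFd0] at this
  have n2 : ∀ x, 0 ≤ x → x ≤ s₁ → 0 ≤ Fd p q Q x := fun x hx1 hx2 => by
    have := M1 (by simp [Set.mem_Iic]; linarith : (0:ℝ) ∈ Iic s₁)
      (by simp only [Set.mem_Iic]; linarith : x ∈ Iic s₁) hx1
    rwa [hFd0] at this
  have n3 : ∀ x, s₂ ≤ x → x ≤ 2*L → Fd p q Q x ≤ 0 := fun x hx1 hx2 => by
    have := M3 (by simp only [Set.mem_Ici]; linarith : x ∈ Ici s₂)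
      (by simp [Set.mem_Ici]; linarith : 2*L ∈ Ici s₂) hx2
    rwa [hFd2L] at this
  have n4 : ∀ x, 2*L ≤ x → 0 ≤ Fd p q Q x := fun x hx => by
    have := M3 (by simp [Set.mem_Ici]; linarith : 2*L ∈ Ici s₂)
      (by simp [Set.mem_Ici]; linarith : x ∈ Ici s₂) hx
    rwa [hFd2L] at this
  -- crossing point in the middle
  obtain ⟨m, hm, hFm⟩ : ∃ m ∈ Icc s₁ s₂, Fd p q Q m = 0 := by
    have hsub := intermediate_value_Icc' hs12 ((Fdcont p q Q hp0 hq0).continuousOn)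
    have h0mem : (0:ℝ) ∈ Icc (Fd p q Q s₂) (Fd p q Q s₁) := by
      constructor
      · exact n3 s₂ le_rfl (le_of_lt hs2lt)
      · exact n2 s₁ (le_of_lt hs1pos) le_rfl
    obtain ⟨m, hm, hFm⟩ := hsub h0mem
    exact ⟨m, hm, hFm⟩
  have n5 : ∀ x, s₁ ≤ x → x ≤ m → 0 ≤ Fd p q Q x := fun x hx1 hx2 => by
    have := M2 (by constructor <;> linarith [hm.1, hm.2] : x ∈ Icc s₁ s₂) hm hx2
    rwa [hFm] at this
  have n6 : ∀ x, m ≤ x → x ≤ s₂ → Fd p q Q x ≤ 0 := fun x hx1 hx2 => by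
    have := M2 hm (by constructor <;> linarith [hm.1, hm.2] : x ∈ Icc s₁ s₂) hx1
    rwa [hFm] at this
  -- monotonicity of F on pieces
  have hd : ∀ (s : Set ℝ) (x : ℝ), HasDerivWithinAt (Ff p q Q) (Fd p q Q x) s x :=
    fun s x => (hasDeriv1 hp0 hq0 x).hasDerivWithinAt
  have FA : AntitoneOn (Ff p q Q) (Iic 0) :=
    antitoneOn_of_hasDerivWithinAt_nonpos (convex_Iic 0) (Ffcont p q Q hp0 hq0).continuousOn (f' := Fd p q Q)
      (fun x hx => hd _ x) (fun x hx => n1 x (le_of_lt (by rwa [interior_Iic] at hx)))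
  have FB : MonotoneOn (Ff p q Q) (Icc 0 s₁) :=
    monotoneOn_of_hasDerivWithinAt_nonneg (convex_Icc 0 s₁) (Ffcont p q Q hp0 hq0).continuousOn (f' := Fd p q Q)
      (fun x hx => hd _ x) (fun x hx => by
        rw [interior_Icc] at hx; exact n2 x (le_of_lt hx.1) (le_of_lt hx.2))
  have FC : MonotoneOn (Ff p q Q) (Icc s₁ m) :=
    monotoneOn_of_hasDerivWithinAt_nonneg (convex_Icc s₁ m) (Ffcont p q Q hp0 hq0).continuousOn (f' := Fd p q Q)
      (fun x hx => hd _ x) (fun x hx => by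
        rw [interior_Icc] at hx; exact n5 x (le_of_lt hx.1) (le_of_lt hx.2))
  have FD : AntitoneOn (Ff p q Q) (Icc m s₂) :=
    antitoneOn_of_hasDerivWithinAt_nonpos (convex_Icc m s₂) (Ffcont p q Q hp0 hq0).continuousOn (f' := Fd p q Q)
      (fun x hx => hd _ x) (fun x hx => by
        rw [interior_Icc] at hx; exact n6 x (le_of_lt hx.1) (le_of_lt hx.2))
  have FE : AntitoneOn (Ff p q Q) (Icc s₂ (2*L)) :=
    antitoneOn_of_hasDerivWithinAt_nonpos (convex_Icc s₂ (2*L)) (Ffcont p q Q hp0 hq0).continuousOn (f' := Fd p q Q)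
      (fun x hx => hd _ x) (fun x hx => by
        rw [interior_Icc] at hx; exact n3 x (le_of_lt hx.1) (le_of_lt hx.2))
  have FF' : MonotoneOn (Ff p q Q) (Ici (2*L)) :=
    monotoneOn_of_hasDerivWithinAt_nonneg (convex_Ici (2*L)) (Ffcont p q Q hp0 hq0).continuousOn (f' := Fd p q Q)
      (fun x hx => hd _ x) (fun x hx => n4 x (le_of_lt (by rwa [interior_Ici] at hx)))
  -- nonnegativity of F
  have hm1 : s₁ ≤ m := hm.1
  have hm2 : m ≤ s₂ := hm.2
  have hFs₁ : 0 ≤ Ff p q Q s₁ := by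
    have := FB (by constructor <;> linarith : (0:ℝ) ∈ Icc 0 s₁)
      (by constructor <;> linarith : s₁ ∈ Icc 0 s₁) (le_of_lt hs1pos)
    rwa [hF0] at this
  have hFs₂ : 0 ≤ Ff p q Q s₂ := by
    have := FE (by constructor <;> linarith : s₂ ∈ Icc s₂ (2*L))
      (by constructor <;> linarith : 2*L ∈ Icc s₂ (2*L)) (le_of_lt hs2lt)
    rw [hF2L] at this
    linarith
  have hFnn : ∀ t : ℝ, 0 ≤ Ff p q Q t := by
    intro t
    rcases le_or_gt t 0 with h | h
    · have := FA (by simpa using h : t ∈ Iic 0) (by simp : (0:ℝ) ∈ Iic 0) h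
      rw [hF0] at this; linarith
    rcases le_or_gt t s₁ with h1 | h1
    · have := FB (by constructor <;> linarith : (0:ℝ) ∈ Icc 0 s₁)
        (by constructor <;> linarith : t ∈ Icc 0 s₁) (le_of_lt h)
      rwa [hF0] at this
    rcases le_or_gt t m with h2 | h2
    · have := FC (by constructor <;> linarith : s₁ ∈ Icc s₁ m)
        (by constructor <;> linarith : t ∈ Icc s₁ m) (le_of_lt h1)
      linarith
    rcases le_or_gt t s₂ with h3 | h3
    · have := FD (by constructor <;> linarith : t ∈ Icc m s₂)
        (by constructor <;> linarith : s₂ ∈ Icc m s₂) h3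
      linarith
    rcases le_or_gt t (2*L) with h4 | h4
    · have := FE (by constructor <;> linarith : t ∈ Icc s₂ (2*L))
        (by constructor <;> linarith : 2*L ∈ Icc s₂ (2*L)) h4
      rw [hF2L] at this; linarith
    · have := FF' (self_mem_Ici)
        (mem_Ici.2 (le_of_lt h4)) (le_of_lt h4)
      rw [hF2L] at this; linarith
  intro t
  have := hFnn t
  unfold Ff at this
  linarith

lemma KS_half (p : ℝ) (hp0 : 0 < p) (hp2 : p < 1/2) (l : ℝ) :
    p * Real.exp (l*(1-p)) + (1-p) * Real.exp (l*(-p))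
      ≤ Real.exp (l^2 * ((1-2*p)/(4 * Real.log ((1-p)/p)))) := by
  have hcore := KS_core p (1-p) (Real.log ((1-p)/p))
    ((1-2*p)/(4*Real.log ((1-p)/p))) hp0 hp2 rfl rfl rfl l
  have h1 : (0:ℝ) < 1 - p := by linarith
  have hden : 0 < p*Real.exp l + (1-p) := add_pos (by positivity) h1
  have h2 : p*Real.exp l + (1-p)
      ≤ Real.exp (p*l + ((1-2*p)/(4*Real.log ((1-p)/p)))*l^2) := by
    rw [← Real.exp_log hden]
    exact Real.exp_le_exp.2 hcore
  calc p * Real.exp (l*(1-p)) + (1-p) * Real.exp (l*(-p))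
      = Real.exp (-(l*p)) * (p*Real.exp l + (1-p)) := by
        rw [show l*(1-p) = l + -(l*p) by ring, Real.exp_add,
          show l*(-p) = -(l*p) by ring]
        ring
    _ ≤ Real.exp (-(l*p)) * Real.exp (p*l + ((1-2*p)/(4*Real.log ((1-p)/p)))*l^2) :=
        mul_le_mul_of_nonneg_left h2 (Real.exp_nonneg _)
    _ = Real.exp (l^2 * ((1-2*p)/(4 * Real.log ((1-p)/p)))) := by
        rw [← Real.exp_add]
        congr 1
        ring

lemma KS (p : ℝ) (hp0 : 0 < p) (hp1 : p < 1) (hp : p ≠ 1/2) (l : ℝ) :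
    p * Real.exp (l*(1-p)) + (1-p) * Real.exp (l*(-p))
      ≤ Real.exp (l^2 * ((1-2*p)/(4 * Real.log ((1-p)/p)))) := by
  rcases lt_or_gt_of_ne hp with h | h
  · exact KS_half p hp0 h l
  · have h2 : 1 - p < 1/2 := by linarith
    have h0 : (0:ℝ) < 1 - p := by linarith
    have this1 := KS_half (1-p) h0 h2 (-l)
    rw [show (1:ℝ)-(1-p) = p by ring] at this1
    rw [show (-l)*p = l*(-p) by ring, show (-l)*(-(1-p)) = l*(1-p) by ring,
      show ((-l):ℝ)^2 = l^2 by ring] at this1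
    have hlog : Real.log (p/(1-p)) = - Real.log ((1-p)/p) := by
      rw [← Real.log_inv, inv_div]
    rw [hlog, show (1-2*(1-p)) = -(1-2*p) by ring,
      show (4:ℝ) * -Real.log ((1-p)/p) = -(4*Real.log ((1-p)/p)) by ring,
      neg_div_neg_eq] at this1
    linarith [this1]

theorem stmt_7 {Ω : Type*} [MeasurableSpace Ω] (μ : Measure Ω) [IsProbabilityMeasure μ]
    (p : ℝ) (hp0 : 0 < p) (hp1 : p < 1) (hp : p ≠ 1 / 2)
    (η : Ω → ℝ) (hmeas : Measurable η)
    (h1 : μ {ω | η ω = 1 - p} = ENNReal.ofReal p)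
    (h2 : μ {ω | η ω = -p} = ENNReal.ofReal (1 - p)) :
    ∀ l : ℝ, ∫ ω, Real.exp (l * η ω) ∂μ
      ≤ Real.exp (l ^ 2 * ((1 - 2 * p) / (4 * Real.log ((1 - p) / p)))) := by
  intro l
  set A : Set Ω := {ω | η ω = 1 - p} with hA
  set B : Set Ω := {ω | η ω = -p} with hB
  have hAmeas : MeasurableSet A := hmeas (measurableSet_singleton (1-p))
  have hBmeas : MeasurableSet B := hmeas (measurableSet_singleton (-p))
  have hne : (1 - p : ℝ) ≠ -p := by intro h; nlinarith [h]
  have hdisj : A ∩ B = ∅ := by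
    ext ω
    simp only [Set.mem_inter_iff, Set.mem_setOf_eq, Set.mem_empty_iff_false, iff_false]
    rintro ⟨ha, hb⟩
    exact hne (ha ▸ hb ▸ rfl)
  have hABunion : μ (A ∪ B) = 1 := by
    rw [measure_union (by rw [Set.disjoint_iff_inter_eq_empty]; exact hdisj) hBmeas, h1, h2,
      ← ENNReal.ofReal_add hp0.le (by linarith)]
    norm_num
  have haeAB : ∀ᵐ ω ∂μ, ω ∈ A ∪ B := by
    rw [MeasureTheory.ae_iff]
    have : {ω | ¬ ω ∈ A ∪ B} = (A ∪ B)ᶜ := rfl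
    rw [this, measure_compl (hAmeas.union hBmeas) (measure_ne_top μ _), hABunion,
      measure_univ]
    simp
  set c₁ : ℝ := Real.exp (l*(1-p)) with hc₁
  set c₂ : ℝ := Real.exp (l*(-p)) with hc₂
  set g : Ω → ℝ := fun ω => A.indicator (fun _ => c₁) ω + B.indicator (fun _ => c₂) ω with hg
  have hae : (fun ω => Real.exp (l * η ω)) =ᵐ[μ] g := by
    filter_upwards [haeAB] with ω hω
    rcases hω with hωA | hωB
    · have hωnB : ω ∉ B := by
        intro hωB
        exact hne ((hωA : η ω = 1-p) ▸ (hωB : η ω = -p) ▸ rfl)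
      simp only [hg, Set.indicator_of_mem hωA, Set.indicator_of_notMem hωnB, add_zero]
      rw [hc₁, (hωA : η ω = 1 - p)]
    · have hωnA : ω ∉ A := by
        intro hωA
        exact hne ((hωA : η ω = 1-p) ▸ (hωB : η ω = -p) ▸ rfl)
      simp only [hg, Set.indicator_of_mem hωB, Set.indicator_of_notMem hωnA, zero_add]
      rw [hc₂, (hωB : η ω = -p)]
  have hint : ∫ ω, Real.exp (l * η ω) ∂μ = c₁ * p + c₂ * (1-p) := by
    rw [integral_congr_ae hae, hg]
    rw [integral_add ((integrable_const c₁).indicator hAmeas)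
      ((integrable_const c₂).indicator hBmeas)]
    rw [integral_indicator_const c₁ hAmeas, integral_indicator_const c₂ hBmeas,
      measureReal_def, measureReal_def, h1, h2, ENNReal.toReal_ofReal hp0.le, ENNReal.toReal_ofReal (by linarith)]
    simp [mul_comm]
  rw [hint]
  have := KS p hp0 hp1 hp l
  calc c₁ * p + c₂ * (1-p) = p * Real.exp (l*(1-p)) + (1-p) * Real.exp (l*(-p)) := by
        rw [hc₁, hc₂]; ring
    _ ≤ Real.exp (l^2 * ((1-2*p)/(4 * Real.log ((1-p)/p)))) := this
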